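/- arXiv:2207.01711 — 2 statements merged into one kernel-verified Lean document; each statement's English description precedes it below -/
import Mathlib

section
/- (Matrix form of Theorem 6.1.) Let Q(T) = det(D − A_ρ) ∈ ℤ_ℓ⟦T⟧. Then for every n ≥ 0 and every group homomorphism ψ: G(n) → K^×, setting t_ψ = (1 − ψ(ē_1), …, 1 − ψ(ē_d)) ∈ K^d, where ē_i ∈ G(n) is the image of the i-th standard basis vector of ℤ_ℓ^d (each coordinate satisfies |1 − ψ(ē_i)| < 1, so the evaluation converges), one has ev_{t_ψ}(Q) = det(D − A_ψ) = h_X(1, ψ). -/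
set_option linter.unusedSectionVars false
set_option maxHeartbeats 1000000

/-- The maximal ideal `𝔪 = (ℓ, T₁, …, T_d)` of `ℤ_ℓ⟦T₁, …, T_d⟧`. -/
noncomputable def mIdeal (ℓ : ℕ) [Fact ℓ.Prime] (d : ℕ) :
    Ideal (MvPowerSeries (Fin d) ℤ_[ℓ]) :=
  Ideal.span ({(ℓ : MvPowerSeries (Fin d) ℤ_[ℓ])} ∪
    Set.range (MvPowerSeries.X : Fin d → MvPowerSeries (Fin d) ℤ_[ℓ]))

/-- Evaluation of a power series `Q = ∑_α c_α T^α ∈ ℤ_ℓ⟦T₁, …, T_d⟧` at a point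
`t ∈ K^d`: `ev_t(Q) = ∑_α c_α t^α`. -/
noncomputable def evalPS (ℓ : ℕ) [Fact ℓ.Prime] {K : Type*} [NormedField K]
    [Algebra ℚ_[ℓ] K] {d : ℕ} (t : Fin d → K)
    (Q : MvPowerSeries (Fin d) ℤ_[ℓ]) : K :=
  ∑' α : Fin d →₀ ℕ,
    algebraMap ℚ_[ℓ] K ((MvPowerSeries.coeff (R := ℤ_[ℓ]) α Q : ℚ_[ℓ])) * ∏ i, t i ^ α i

/-- The valency of the vertex `i` of the multigraph with oriented-edge set `S`,
origin map `eo` and terminus map `et` (each undirected edge appearing exactly once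
in `S`): `dᵢ = #{s : o(s) = i} + #{s : t(s) = i}` (so loops count twice). -/
def valency {g : ℕ} {S : Type*} [Fintype S] (eo et : S → Fin g) (i : Fin g) : ℕ :=
  (Finset.univ.filter fun s => eo s = i).card +
    (Finset.univ.filter fun s => et s = i).card

open Finset Filter

section Helpers

variable {G M : Type*}

lemma s6_addhom_zero [AddMonoid G] [Group M] (f : G → M)
    (h : ∀ a b, f (a + b) = f a * f b) : f 0 = 1 := by
  have h0 := h 0 0
  rw [add_zero] at h0
  exact (left_eq_mul.mp h0)

lemma s6_addhom_nsmul [AddMonoid G] [Group M] (f : G → M)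
    (h : ∀ a b, f (a + b) = f a * f b) (m : ℕ) (a : G) : f (m • a) = f a ^ m := by
  induction m with
  | zero => simpa using s6_addhom_zero f h
  | succ k ih => rw [succ_nsmul, h, ih, pow_succ]

lemma s6_addhom_sum [AddCommMonoid G] [CommGroup M] (f : G → M)
    (h : ∀ a b, f (a + b) = f a * f b) {ι : Type*} (s : Finset ι) (g : ι → G) :
    f (∑ i ∈ s, g i) = ∏ i ∈ s, f (g i) := by
  classical
  induction s using Finset.induction with
  | empty => simpa using s6_addhom_zero f h
  | insert a s' hx ih => rw [Finset.sum_insert hx, h, ih, Finset.prod_insert hx]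

lemma s6_summable {K : Type*} [NormedField K] [CompleteSpace K] [IsUltrametricDist K]
    {ι : Type*} {f : ι → K} (h : Tendsto f cofinite (nhds 0)) : Summable f := by
  rw [summable_iff_vanishing_norm]
  intro ε hε
  have h2 : ∀ᶠ i in cofinite, ‖f i‖ < ε / 2 := by
    have := Metric.tendsto_nhds.mp h (ε / 2) (by linarith)
    simpa [dist_zero_right] using this
  rw [Filter.eventually_cofinite] at h2
  refine ⟨h2.toFinset, fun s hs => ?_⟩
  have hb : ‖∑ i ∈ s, f i‖ ≤ ε / 2 := by
    refine IsUltrametricDist.norm_sum_le_of_forall_le_of_nonneg (by linarith) fun i hi => ?_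
    have : i ∉ h2.toFinset := fun hc => (Finset.disjoint_left.mp hs hi) hc
    rw [Set.Finite.mem_toFinset] at this
    have h3 : ‖f i‖ < ε / 2 := by simpa using this
    exact h3.le
  linarith

lemma s6_coe_sum {p : ℕ} [Fact p.Prime] {ι : Type*} (s : Finset ι) (f : ι → ℤ_[p]) :
    ((∑ i ∈ s, f i : ℤ_[p]) : ℚ_[p]) = ∑ i ∈ s, ((f i : ℚ_[p])) := by
  classical
  induction s using Finset.induction with
  | empty => simp
  | insert a s' hx ih =>
      rw [Finset.sum_insert hx, Finset.sum_insert hx, PadicInt.coe_add, ih]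

end Helpers

section Eval

variable (ℓ : ℕ) [Fact ℓ.Prime] {K : Type*} [NormedField K] [CompleteSpace K]
  [IsUltrametricDist K] [Algebra ℚ_[ℓ] K] {d : ℕ} (t : Fin d → K)

/-- One term of the evaluation series. -/
noncomputable def s6term (f : MvPowerSeries (Fin d) ℤ_[ℓ]) (α : Fin d →₀ ℕ) : K :=
  algebraMap ℚ_[ℓ] K ((MvPowerSeries.coeff (R := ℤ_[ℓ]) α f : ℚ_[ℓ])) * ∏ i, t i ^ α i

variable (hext : ∀ x : ℚ_[ℓ], ‖algebraMap ℚ_[ℓ] K x‖ = ‖x‖)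

include hext in
lemma s6_norm_coe_le_one (c : ℤ_[ℓ]) : ‖algebraMap ℚ_[ℓ] K (c : ℚ_[ℓ])‖ ≤ 1 := by
  rw [hext, PadicInt.padic_norm_e_of_padicInt]
  exact PadicInt.norm_le_one c

include hext in
lemma s6_norm_term_le (f : MvPowerSeries (Fin d) ℤ_[ℓ]) (α : Fin d →₀ ℕ) :
    ‖s6term ℓ t f α‖ ≤ ∏ i, ‖t i‖ ^ α i := by
  rw [s6term, norm_mul]
  calc ‖algebraMap ℚ_[ℓ] K ((MvPowerSeries.coeff (R := ℤ_[ℓ]) α f : ℚ_[ℓ]))‖ * ‖∏ i, t i ^ α i‖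
      ≤ 1 * ‖∏ i, t i ^ α i‖ := by
        gcongr; exact s6_norm_coe_le_one ℓ hext _
    _ = ∏ i, ‖t i‖ ^ α i := by rw [one_mul, norm_prod]; simp [norm_pow]

include hext in
lemma s6_norm_term_le_one (ht : ∀ i, ‖t i‖ ≤ 1) (f : MvPowerSeries (Fin d) ℤ_[ℓ])
    (α : Fin d →₀ ℕ) : ‖s6term ℓ t f α‖ ≤ 1 := by
  refine (s6_norm_term_le ℓ t hext f α).trans ?_
  exact Finset.prod_le_one (fun i _ => by positivity) (fun i _ => pow_le_one₀ (norm_nonneg _) (ht i))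

include hext in
lemma s6_tendsto_term (ht : ∀ i, ‖t i‖ < 1) (f : MvPowerSeries (Fin d) ℤ_[ℓ]) :
    Tendsto (s6term ℓ t f) cofinite (nhds 0) := by
  classical
  set r : ℝ := ((Finset.univ.sup fun i => ‖t i‖₊ : NNReal) : ℝ) with hr
  have hr0 : 0 ≤ r := (Finset.univ.sup fun i => ‖t i‖₊ : NNReal).coe_nonneg
  have hr1 : r < 1 := by
    rw [hr]
    norm_cast
    refine Finset.sup_lt_iff (by norm_num) |>.2 fun i _ => ?_
    exact_mod_cast ht i
  have hti : ∀ i, ‖t i‖ ≤ r := fun i => by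
    rw [hr]
    exact_mod_cast (Finset.le_sup (f := fun i => ‖t i‖₊) (Finset.mem_univ i) : ‖t i‖₊ ≤ _)
  rw [Metric.tendsto_nhds]
  intro ε hε
  rw [Filter.eventually_cofinite]
  obtain ⟨N, hN⟩ := exists_pow_lt_of_lt_one hε hr1
  set βN : Fin d →₀ ℕ := Finsupp.equivFunOnFinite.symm (fun _ => N) with hβ
  refine Set.Finite.subset (Finset.Iic βN).finite_toSet fun α hα => ?_
  simp only [Set.mem_setOf_eq, not_lt, dist_zero_right] at hα
  by_contra hmem
  simp only [Finset.coe_Iic, Set.mem_Iic] at hmem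
  rw [Finsupp.le_def] at hmem
  push_neg at hmem
  obtain ⟨i, hi⟩ := hmem
  have hi' : N < α i := by simpa [hβ] using hi
  have hb : ‖s6term ℓ t f α‖ ≤ r ^ N := by
    refine (s6_norm_term_le ℓ t hext f α).trans ?_
    calc ∏ j, ‖t j‖ ^ α j ≤ ‖t i‖ ^ α i := by
          rw [← Finset.mul_prod_erase Finset.univ _ (Finset.mem_univ i)]
          refine mul_le_of_le_one_right (by positivity) ?_
          exact Finset.prod_le_one (fun j _ => by positivity)
              (fun j _ => pow_le_one₀ (norm_nonneg _) (ht j).le)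
      _ ≤ r ^ α i := pow_le_pow_left₀ (norm_nonneg _) (hti i) _
      _ ≤ r ^ N := pow_le_pow_of_le_one hr0 hr1.le hi'.le
  exact absurd (hα.trans_lt (hb.trans_lt hN)) (lt_irrefl ε)

include hext in
lemma s6_summable_term (ht : ∀ i, ‖t i‖ < 1) (f : MvPowerSeries (Fin d) ℤ_[ℓ]) :
    Summable (s6term ℓ t f) :=
  s6_summable (s6_tendsto_term ℓ t hext ht f)

end Eval

section EvalHom

variable (ℓ : ℕ) [Fact ℓ.Prime] {K : Type*} [NormedField K] [CompleteSpace K]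
  [IsUltrametricDist K] [Algebra ℚ_[ℓ] K] {d : ℕ} (t : Fin d → K)
  (hext : ∀ x : ℚ_[ℓ], ‖algebraMap ℚ_[ℓ] K x‖ = ‖x‖) (ht : ∀ i, ‖t i‖ < 1)

include hext ht in
lemma s6_summable_prod (f g : MvPowerSeries (Fin d) ℤ_[ℓ]) :
    Summable (fun x : (Fin d →₀ ℕ) × (Fin d →₀ ℕ) => s6term ℓ t f x.1 * s6term ℓ t g x.2) := by
  refine s6_summable ?_
  rw [Metric.tendsto_nhds]
  intro ε hε
  rw [Filter.eventually_cofinite]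
  have hf := (s6_tendsto_term ℓ t hext ht f)
  have hg := (s6_tendsto_term ℓ t hext ht g)
  rw [Metric.tendsto_nhds] at hf hg
  have hf' := hf ε hε; have hg' := hg ε hε
  rw [Filter.eventually_cofinite] at hf' hg'
  refine Set.Finite.subset (hf'.prod hg') fun p hp => ?_
  simp only [Set.mem_setOf_eq, not_lt, dist_zero_right, Set.mem_prod] at hp ⊢
  have h1 : ‖s6term ℓ t f p.1‖ ≤ 1 := s6_norm_term_le_one ℓ t hext (fun i => (ht i).le) f p.1
  have h2 : ‖s6term ℓ t g p.2‖ ≤ 1 := s6_norm_term_le_one ℓ t hext (fun i => (ht i).le) g p.2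
  rw [norm_mul] at hp
  constructor
  · exact hp.trans (mul_le_of_le_one_right (norm_nonneg _) h2)
  · exact hp.trans (mul_le_of_le_one_left (norm_nonneg _) h1)

lemma s6_term_mul (f g : MvPowerSeries (Fin d) ℤ_[ℓ]) (α : Fin d →₀ ℕ) :
    s6term ℓ t (f * g) α =
      ∑ kl ∈ Finset.HasAntidiagonal.antidiagonal α, s6term ℓ t f kl.1 * s6term ℓ t g kl.2 := by
  classical
  rw [s6term, MvPowerSeries.coeff_mul, s6_coe_sum, map_sum, Finset.sum_mul]
  refine Finset.sum_congr rfl fun kl hkl => ?_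
  rw [Finset.HasAntidiagonal.mem_antidiagonal] at hkl
  rw [PadicInt.coe_mul, map_mul, s6term, s6term]
  have hprod : (∏ i, t i ^ α i) = (∏ i, t i ^ kl.1 i) * ∏ i, t i ^ kl.2 i := by
    rw [← Finset.prod_mul_distrib]
    refine Finset.prod_congr rfl fun i _ => ?_
    rw [← pow_add]
    congr 1
    rw [← hkl, Finsupp.add_apply]
  rw [hprod]; ring

lemma s6_evalPS_eq (f : MvPowerSeries (Fin d) ℤ_[ℓ]) :
    evalPS ℓ t f = ∑' β : Fin d →₀ ℕ, s6term ℓ t f β := rfl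

lemma s6_evalPS_zero : evalPS ℓ t (0 : MvPowerSeries (Fin d) ℤ_[ℓ]) = 0 := by
  rw [s6_evalPS_eq]
  have h : ∀ β : Fin d →₀ ℕ, s6term ℓ t (0 : MvPowerSeries (Fin d) ℤ_[ℓ]) β = 0 := by
    intro β; simp [s6term]
  rw [tsum_congr h, tsum_zero]

lemma s6_evalPS_one : evalPS ℓ t (1 : MvPowerSeries (Fin d) ℤ_[ℓ]) = 1 := by
  classical
  rw [s6_evalPS_eq, tsum_eq_single (0 : Fin d →₀ ℕ)]
  · simp [s6term, MvPowerSeries.coeff_one]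
  · intro β hβ; simp [s6term, MvPowerSeries.coeff_one, hβ]

include hext ht in
lemma s6_evalPS_add (f g : MvPowerSeries (Fin d) ℤ_[ℓ]) :
    evalPS ℓ t (f + g) = evalPS ℓ t f + evalPS ℓ t g := by
  rw [s6_evalPS_eq, s6_evalPS_eq, s6_evalPS_eq,
    ← Summable.tsum_add (s6_summable_term ℓ t hext ht f) (s6_summable_term ℓ t hext ht g)]
  refine tsum_congr fun β => ?_
  rw [s6term, s6term, s6term, map_add, PadicInt.coe_add, map_add, add_mul]

include hext ht in
lemma s6_evalPS_mul (f g : MvPowerSeries (Fin d) ℤ_[ℓ]) :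
    evalPS ℓ t (f * g) = evalPS ℓ t f * evalPS ℓ t g := by
  classical
  rw [s6_evalPS_eq, s6_evalPS_eq, s6_evalPS_eq,
    Summable.tsum_mul_tsum_eq_tsum_sum_antidiagonal (s6_summable_term ℓ t hext ht f)
      (s6_summable_term ℓ t hext ht g) (s6_summable_prod ℓ t hext ht f g)]
  exact tsum_congr fun β => s6_term_mul ℓ t f g β

/-- The evaluation ring homomorphism. -/
noncomputable def s6evalHom : MvPowerSeries (Fin d) ℤ_[ℓ] →+* K where
  toFun := evalPS ℓ t
  map_zero' := s6_evalPS_zero ℓ t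
  map_one' := s6_evalPS_one ℓ t
  map_add' := s6_evalPS_add ℓ t hext ht
  map_mul' := s6_evalPS_mul ℓ t hext ht

lemma s6evalHom_apply (f : MvPowerSeries (Fin d) ℤ_[ℓ]) :
    s6evalHom ℓ t hext ht f = ∑' β : Fin d →₀ ℕ, s6term ℓ t f β := rfl

lemma s6evalHom_X (i : Fin d) : s6evalHom ℓ t hext ht (MvPowerSeries.X i) = t i := by
  classical
  rw [s6evalHom_apply, tsum_eq_single (Finsupp.single i 1)]
  · rw [s6term, MvPowerSeries.coeff_X, if_pos rfl, PadicInt.coe_one, map_one, one_mul]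
    rw [Finset.prod_eq_single i]
    · simp
    · intro j _ hj; simp [Finsupp.single_apply, (Ne.symm hj)]
    · simp
  · intro β hβ
    rw [s6term, MvPowerSeries.coeff_X, if_neg hβ, PadicInt.coe_zero, map_zero, zero_mul]

include hext in
lemma s6evalHom_norm_le_one (f : MvPowerSeries (Fin d) ℤ_[ℓ]) :
    ‖s6evalHom ℓ t hext ht f‖ ≤ 1 := by
  rw [s6evalHom_apply]
  exact IsUltrametricDist.norm_tsum_le_of_forall_le_of_nonneg zero_le_one
    (fun β => s6_norm_term_le_one ℓ t hext (fun i => (ht i).le) f β)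

/-- The ideal of power series whose evaluation has norm at most `c`. -/
noncomputable def s6boundIdeal (c : ℝ) (hc : 0 ≤ c) : Ideal (MvPowerSeries (Fin d) ℤ_[ℓ]) where
  carrier := {f | ‖s6evalHom ℓ t hext ht f‖ ≤ c}
  add_mem' := fun {a b} ha hb => by
    simp only [Set.mem_setOf_eq] at *
    rw [map_add]
    exact (IsUltrametricDist.norm_add_le_max _ _).trans (max_le ha hb)
  zero_mem' := by simp [Set.mem_setOf_eq, hc]
  smul_mem' := fun a f hf => by
    simp only [Set.mem_setOf_eq, smul_eq_mul, map_mul, norm_mul] at *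
    exact (mul_le_of_le_one_left (norm_nonneg _) (s6evalHom_norm_le_one ℓ t hext ht a)).trans hf

include hext in
lemma s6_pow_bound (r : ℝ) (hr0 : 0 ≤ r)
    (hrl : ‖s6evalHom ℓ t hext ht ((ℓ : MvPowerSeries (Fin d) ℤ_[ℓ]))‖ ≤ r)
    (hrt : ∀ i, ‖t i‖ ≤ r) :
    ∀ M : ℕ, ∀ f ∈ (mIdeal ℓ d) ^ M, ‖s6evalHom ℓ t hext ht f‖ ≤ r ^ M := by
  have hgen : mIdeal ℓ d ≤ s6boundIdeal ℓ t hext ht r hr0 := by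
    rw [mIdeal, Ideal.span_le]
    rintro x (hx | ⟨i, rfl⟩)
    · rw [Set.mem_singleton_iff] at hx
      subst hx
      exact hrl
    · show ‖s6evalHom ℓ t hext ht (MvPowerSeries.X i)‖ ≤ r
      rw [s6evalHom_X]
      exact hrt i
  intro M
  induction M with
  | zero =>
      intro f _
      rw [pow_zero]
      exact s6evalHom_norm_le_one ℓ t hext ht f
  | succ M ih =>
      intro f hf
      rw [pow_succ] at hf
      have : f ∈ s6boundIdeal ℓ t hext ht (r ^ (M + 1)) (by positivity) := by
        refine Ideal.mul_le.mpr (fun a ha b hb => ?_) hf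
        show ‖s6evalHom ℓ t hext ht (a * b)‖ ≤ r ^ (M + 1)
        rw [map_mul, norm_mul, pow_succ]
        exact mul_le_mul (ih a ha) (hgen hb) (norm_nonneg _) (by positivity)
      exact this

end EvalHom

lemma s6_units_val_prod {R : Type*} [CommMonoid R] {ι : Type*} (s : Finset ι) (f : ι → Rˣ) :
    ((∏ i ∈ s, f i : Rˣ) : R) = ∏ i ∈ s, ((f i : R)) :=
  map_prod (Units.coeHom R) f s

/-- matrix form of Theorem 6.1.  With `X` a finite multigraph on
vertices `v₁, …, v_g`, `α : S → ℤ_ℓ^d` a voltage assignment, `ρ` the `(ℓ,T)`-adic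
character with `ρ(eᵢ) = 1 - Tᵢ`, and `Q(T) = det(D - A_ρ) ∈ ℤ_ℓ⟦T⟧`: for every `n ≥ 0`
and every group homomorphism `ψ : G(n) = (ℤ/ℓ^n ℤ)^d → Kˣ`, setting
`t_ψ = (1 - ψ(ē₁), …, 1 - ψ(ē_d))`, each coordinate satisfies `‖1 - ψ(ēᵢ)‖ < 1`, the
evaluation converges, and `ev_{t_ψ}(Q) = det(D - A_ψ) = h_X(1, ψ)`. -/
theorem stmt_6 (ℓ : ℕ) [Fact ℓ.Prime]
    (K : Type*) [NormedField K] [CompleteSpace K] [IsUltrametricDist K]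
    [Algebra ℚ_[ℓ] K]
    (hext : ∀ x : ℚ_[ℓ], ‖algebraMap ℚ_[ℓ] K x‖ = ‖x‖)
    (d : ℕ) (hd : 0 < d)
    (g : ℕ) (S : Type*) [Fintype S] (eo et : S → Fin g)
    (α : S → Fin d → ℤ_[ℓ])
    (ρ : (Fin d → ℤ_[ℓ]) → (MvPowerSeries (Fin d) ℤ_[ℓ])ˣ)
    (hρhom : ∀ a b, ρ (a + b) = ρ a * ρ b)
    (hρcont : @Continuous (Fin d → ℤ_[ℓ]) (MvPowerSeries (Fin d) ℤ_[ℓ]) _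
      ((mIdeal ℓ d).adicTopology) fun a => (ρ a : MvPowerSeries (Fin d) ℤ_[ℓ]))
    (hρX : ∀ i : Fin d, (ρ (Pi.single i 1) : MvPowerSeries (Fin d) ℤ_[ℓ])
      = 1 - MvPowerSeries.X i)
    -- `Q(T) = det(D - A_ρ)`:
    (Q : MvPowerSeries (Fin d) ℤ_[ℓ])
    (hQ : Q = Matrix.det
      (Matrix.diagonal (fun i => (valency eo et i : MvPowerSeries (Fin d) ℤ_[ℓ])) -
        Matrix.of fun i j =>
          (∑ s ∈ Finset.univ.filter fun s => eo s = i ∧ et s = j,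
              (ρ (α s) : MvPowerSeries (Fin d) ℤ_[ℓ])) +
          ∑ s ∈ Finset.univ.filter fun s => eo s = j ∧ et s = i,
              (ρ (-α s) : MvPowerSeries (Fin d) ℤ_[ℓ])))
    (n : ℕ) (ψ : (Fin d → ZMod (ℓ ^ n)) → Kˣ)
    (hψhom : ∀ x y, ψ (x + y) = ψ x * ψ y) :
    (∀ i : Fin d, ‖1 - (ψ (Pi.single i 1) : K)‖ < 1) ∧
    Summable (fun β : Fin d →₀ ℕ =>
      algebraMap ℚ_[ℓ] K ((MvPowerSeries.coeff (R := ℤ_[ℓ]) β Q : ℚ_[ℓ])) *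
        ∏ i, (1 - (ψ (Pi.single i 1) : K)) ^ β i) ∧
    evalPS ℓ (fun i => 1 - (ψ (Pi.single i 1) : K)) Q =
      Matrix.det
        (Matrix.diagonal (fun i => (valency eo et i : K)) -
          Matrix.of fun i j =>
            (∑ s ∈ Finset.univ.filter fun s => eo s = i ∧ et s = j,
                (ψ (fun k => PadicInt.toZModPow n (α s k)) : K)) +
            ∑ s ∈ Finset.univ.filter fun s => eo s = j ∧ et s = i,
                ((ψ (fun k => PadicInt.toZModPow n (α s k)))⁻¹ : K)) := by
  classical
  letI : TopologicalSpace (MvPowerSeries (Fin d) ℤ_[ℓ]) := (mIdeal ℓ d).adicTopology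
  have hℓ1 : 1 < ℓ := (Fact.out : ℓ.Prime).one_lt
  have hψ0 : ψ 0 = 1 := s6_addhom_zero ψ hψhom
  set t : Fin d → K := fun i => 1 - (ψ (Pi.single i 1) : K) with htdef
  -- Part 1: the coordinates are small
  have ht : ∀ i : Fin d, ‖1 - (ψ (Pi.single i 1) : K)‖ < 1 := by
    intro i
    set u : Kˣ := ψ (Pi.single i 1) with hu
    have hm1 : 1 ≤ ℓ ^ n := Nat.one_le_pow _ _ (by omega)
    have hupow : (u : K) ^ (ℓ ^ n) = 1 := by
      have h1 : (ℓ ^ n) • (Pi.single i 1 : Fin d → ZMod (ℓ ^ n)) = 0 := by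
        funext k
        simp only [Pi.smul_apply, Pi.zero_apply, nsmul_eq_mul]
        rw [show ((ℓ ^ n : ℕ) : ZMod (ℓ ^ n)) = 0 from ZMod.natCast_self _]
        ring
      have h2 := s6_addhom_nsmul ψ hψhom (ℓ ^ n) (Pi.single i 1)
      rw [h1, hψ0] at h2
      have h3 := congrArg (Units.val) h2.symm
      simpa using h3
    rw [norm_sub_rev]
    set x : K := (u : K) - 1 with hx
    by_contra hcon
    push_neg at hcon
    have hxpos : (0:ℝ) < ‖x‖ := lt_of_lt_of_le one_pos hcon
    have hbin : ∑ k ∈ Finset.range (ℓ ^ n + 1), x ^ k * ((ℓ ^ n).choose k : K) = 1 := by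
      have hxu : x + 1 = (u : K) := by rw [hx]; ring
      have h5 : (x + 1) ^ (ℓ ^ n) = 1 := by rw [hxu]; exact hupow
      rw [add_pow] at h5
      simpa using h5
    have hsum0 : ∑ k ∈ Finset.Ico 1 (ℓ ^ n + 1), x ^ k * ((ℓ ^ n).choose k : K) = 0 := by
      have h6 := hbin
      rw [Finset.range_eq_Ico, Finset.sum_eq_sum_Ico_succ_bot (by omega)] at h6
      simp only [pow_zero, Nat.choose_zero_right, Nat.cast_one, one_mul] at h6
      linear_combination h6
    have htop : x ^ (ℓ ^ n) = - ∑ k ∈ Finset.Ico 1 (ℓ ^ n), x ^ k * ((ℓ ^ n).choose k : K) := by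
      have h7 := hsum0
      rw [Finset.sum_Ico_succ_top hm1] at h7
      rw [Nat.choose_self, Nat.cast_one, mul_one] at h7
      linear_combination h7
    have hC : ∀ k ∈ Finset.Ico 1 (ℓ ^ n), ‖x ^ k * ((ℓ ^ n).choose k : K)‖
        ≤ (ℓ:ℝ)⁻¹ * ‖x‖ ^ (ℓ ^ n - 1) := by
      intro k hk
      rw [Finset.mem_Ico] at hk
      rw [norm_mul, norm_pow]
      have hxk : ‖x‖ ^ k ≤ ‖x‖ ^ (ℓ ^ n - 1) := pow_le_pow_right₀ hcon (by omega)
      have hCk : ‖(((ℓ ^ n).choose k : ℕ) : K)‖ ≤ (ℓ:ℝ)⁻¹ := by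
        obtain ⟨c, hc⟩ := (Fact.out : ℓ.Prime).dvd_choose_pow
          (by omega : k ≠ 0) (by omega : k ≠ ℓ ^ n)
        rw [hc]
        rw [show (((ℓ * c : ℕ)) : K) = algebraMap ℚ_[ℓ] K (((ℓ * c : ℕ)) : ℚ_[ℓ]) from
          (map_natCast (algebraMap ℚ_[ℓ] K) _).symm, hext]
        push_cast
        rw [norm_mul, Padic.norm_p]
        have hc1 : ‖((c : ℕ) : ℚ_[ℓ])‖ ≤ 1 := by
          have := Padic.norm_int_le_one (p := ℓ) (c : ℤ)
          push_cast at this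
          exact this
        calc (ℓ:ℝ)⁻¹ * ‖((c:ℕ) : ℚ_[ℓ])‖ ≤ (ℓ:ℝ)⁻¹ * 1 := by
              gcongr
          _ = (ℓ:ℝ)⁻¹ := mul_one _
      calc ‖x‖ ^ k * ‖(((ℓ ^ n).choose k : ℕ) : K)‖
          ≤ ‖x‖ ^ (ℓ ^ n - 1) * (ℓ:ℝ)⁻¹ :=
            mul_le_mul hxk hCk (norm_nonneg _) (by positivity)
        _ = (ℓ:ℝ)⁻¹ * ‖x‖ ^ (ℓ ^ n - 1) := mul_comm _ _
    have hnorm : ‖x‖ ^ (ℓ ^ n) ≤ (ℓ:ℝ)⁻¹ * ‖x‖ ^ (ℓ ^ n - 1) := by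
      rw [← norm_pow, htop, norm_neg]
      exact IsUltrametricDist.norm_sum_le_of_forall_le_of_nonneg (by positivity) hC
    have h5 : ‖x‖ ^ (ℓ ^ n - 1) ≤ ‖x‖ ^ (ℓ ^ n) := pow_le_pow_right₀ hcon (by omega)
    have h6 : (ℓ:ℝ)⁻¹ * ‖x‖ ^ (ℓ ^ n - 1) < 1 * ‖x‖ ^ (ℓ ^ n - 1) := by
      apply mul_lt_mul_of_pos_right _ (by positivity)
      exact inv_lt_one_of_one_lt₀ (by exact_mod_cast hℓ1)
    rw [one_mul] at h6
    linarith
  have ht' : ∀ i, ‖t i‖ < 1 := fun i => ht i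
  refine ⟨ht, s6_summable_term ℓ t hext ht' Q, ?_⟩
  set E : MvPowerSeries (Fin d) ℤ_[ℓ] →+* K := s6evalHom ℓ t hext ht' with hE
  -- the radius
  set r : ℝ := max ((ℓ:ℝ)⁻¹) ((Finset.univ.sup fun i => ‖t i‖₊ : NNReal) : ℝ) with hrdef
  have hr0 : 0 ≤ r := le_trans (by positivity) (le_max_left _ _)
  have hrt : ∀ i, ‖t i‖ ≤ r := fun i =>
    le_trans (by exact_mod_cast Finset.le_sup (f := fun i => ‖t i‖₊) (Finset.mem_univ i))
      (le_max_right _ _)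
  have hr1 : r < 1 := by
    refine max_lt (inv_lt_one_of_one_lt₀ (by exact_mod_cast hℓ1)) ?_
    norm_cast
    refine Finset.sup_lt_iff (by norm_num) |>.2 fun i _ => ?_
    exact_mod_cast ht' i
  have hrl : ‖E ((ℓ : MvPowerSeries (Fin d) ℤ_[ℓ]))‖ ≤ r := by
    rw [map_natCast]
    rw [show ((ℓ:ℕ) : K) = algebraMap ℚ_[ℓ] K ((ℓ:ℕ) : ℚ_[ℓ]) from (map_natCast _ _).symm,
      hext, Padic.norm_p]
    exact le_max_left _ _
  have hbound := s6_pow_bound ℓ t hext ht' r hr0 hrl hrt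
  have hρ0 : ρ 0 = 1 := s6_addhom_zero ρ hρhom
  -- evaluation on integer vectors
  have hint : ∀ m : Fin d → ℕ, E ((ρ (fun i => ((m i : ℕ) : ℤ_[ℓ])) : MvPowerSeries (Fin d) ℤ_[ℓ]))
      = ((ψ (fun k => ((m k : ℕ) : ZMod (ℓ ^ n))) : Kˣ) : K) := by
    intro m
    have hdec : (fun i => ((m i : ℕ) : ℤ_[ℓ])) = ∑ i, (m i) • Pi.single i (1:ℤ_[ℓ]) := by
      funext k
      rw [Finset.sum_apply]
      simp [Pi.single_apply, smul_ite, Finset.sum_ite_eq, nsmul_eq_mul]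
    have h1 : ρ (fun i => ((m i : ℕ) : ℤ_[ℓ])) = ∏ i, (ρ (Pi.single i 1)) ^ (m i) := by
      rw [hdec, s6_addhom_sum ρ hρhom]
      exact Finset.prod_congr rfl fun i _ => s6_addhom_nsmul ρ hρhom (m i) _
    have h2 : ((ρ (fun i => ((m i : ℕ) : ℤ_[ℓ])) : MvPowerSeries (Fin d) ℤ_[ℓ]))
        = ∏ i, (1 - MvPowerSeries.X i) ^ (m i) := by
      rw [h1, s6_units_val_prod]
      exact Finset.prod_congr rfl fun i _ => by rw [Units.val_pow_eq_pow_val, hρX i]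
    have h3 : E ((ρ (fun i => ((m i : ℕ) : ℤ_[ℓ])) : MvPowerSeries (Fin d) ℤ_[ℓ]))
        = ∏ i, ((ψ (Pi.single i 1) : K)) ^ (m i) := by
      rw [h2, map_prod]
      refine Finset.prod_congr rfl fun i _ => ?_
      rw [map_pow, map_sub, map_one, show E (MvPowerSeries.X i) = t i from
        s6evalHom_X ℓ t hext ht' i]
      congr 1
      show 1 - t i = _
      rw [htdef]
      ring
    have h4 : (fun k => ((m k : ℕ) : ZMod (ℓ ^ n)))
        = ∑ i, (m i) • Pi.single i (1 : ZMod (ℓ ^ n)) := by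
      funext k
      rw [Finset.sum_apply]
      simp [Pi.single_apply, smul_ite, Finset.sum_ite_eq, nsmul_eq_mul]
    have h5 : ψ (fun k => ((m k : ℕ) : ZMod (ℓ ^ n))) = ∏ i, (ψ (Pi.single i 1)) ^ (m i) := by
      rw [h4, s6_addhom_sum ψ hψhom]
      exact Finset.prod_congr rfl fun i _ => s6_addhom_nsmul ψ hψhom (m i) _
    rw [h3, h5, s6_units_val_prod]
    exact Finset.prod_congr rfl fun i _ => (Units.val_pow_eq_pow_val _ _).symm
  -- the key limit lemma
  have hkey : ∀ a : Fin d → ℤ_[ℓ], E ((ρ a : MvPowerSeries (Fin d) ℤ_[ℓ]))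
      = ((ψ (fun k => PadicInt.toZModPow n (a k)) : Kˣ) : K) := by
    intro a
    set y : ℕ → (Fin d → ℤ_[ℓ]) := fun N i => (((a i).appr N : ℕ) : ℤ_[ℓ]) with hy
    have h1 : Tendsto y atTop (nhds a) := by
      rw [tendsto_pi_nhds]
      intro i
      rw [tendsto_iff_norm_sub_tendsto_zero]
      refine squeeze_zero (fun N => norm_nonneg _) (fun N => ?_)
        (tendsto_pow_atTop_nhds_zero_of_lt_one (r := (ℓ:ℝ)⁻¹) (by positivity)
          (inv_lt_one_of_one_lt₀ (by exact_mod_cast hℓ1)))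
      have hspec := PadicInt.appr_spec N (a i)
      rw [Ideal.mem_span_singleton] at hspec
      obtain ⟨c, hc⟩ := hspec
      have hns : y N i - a i = -((ℓ:ℤ_[ℓ])^N * c) := by rw [← hc]; ring
      rw [hns, norm_neg, norm_mul, norm_pow, PadicInt.norm_p]
      calc ((ℓ:ℝ)⁻¹) ^ N * ‖c‖ ≤ ((ℓ:ℝ)⁻¹) ^ N * 1 := by
            gcongr; exact PadicInt.norm_le_one c
        _ = ((ℓ:ℝ)⁻¹) ^ N := mul_one _
    have h2 : Tendsto (fun N => ((ρ (y N) : MvPowerSeries (Fin d) ℤ_[ℓ]))) atTop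
        (nhds ((ρ a : MvPowerSeries (Fin d) ℤ_[ℓ]))) := (hρcont.tendsto a).comp h1
    have h3 : Tendsto (fun N => E ((ρ (y N) : MvPowerSeries (Fin d) ℤ_[ℓ]))) atTop
        (nhds (E ((ρ a : MvPowerSeries (Fin d) ℤ_[ℓ])))) := by
      rw [Metric.tendsto_atTop]
      intro ε hε
      obtain ⟨M, hM⟩ := exists_pow_lt_of_lt_one hε hr1
      have hU : ((fun z => ((ρ a : MvPowerSeries (Fin d) ℤ_[ℓ])) + z) ''
          ((mIdeal ℓ d ^ M : Ideal (MvPowerSeries (Fin d) ℤ_[ℓ])) : Set _))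
          ∈ nhds ((ρ a : MvPowerSeries (Fin d) ℤ_[ℓ])) :=
        ((mIdeal ℓ d).hasBasis_nhds_adic ((ρ a : MvPowerSeries (Fin d) ℤ_[ℓ]))).mem_of_mem trivial
      have hev := h2.eventually_mem hU
      rw [Filter.eventually_atTop] at hev
      obtain ⟨N₀, hN₀⟩ := hev
      refine ⟨N₀, fun N hN => ?_⟩
      obtain ⟨w, hw, hweq⟩ := hN₀ N hN
      rw [dist_eq_norm]
      have hsub : E ((ρ (y N) : MvPowerSeries (Fin d) ℤ_[ℓ]))
          - E ((ρ a : MvPowerSeries (Fin d) ℤ_[ℓ])) = E w := by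
        rw [← hweq, map_add]; ring
      rw [hsub]
      exact lt_of_le_of_lt (hbound M w hw) hM
    have h4 : ∀ᶠ N in atTop, E ((ρ (y N) : MvPowerSeries (Fin d) ℤ_[ℓ]))
        = ((ψ (fun k => PadicInt.toZModPow n (a k)) : Kˣ) : K) := by
      rw [Filter.eventually_atTop]
      refine ⟨n, fun N hN => ?_⟩
      have harg : (fun k => (((a k).appr N : ℕ) : ZMod (ℓ ^ n)))
          = fun k => PadicInt.toZModPow n (a k) := by
        funext k
        have hmem : (a k) - (((a k).appr N : ℕ) : ℤ_[ℓ]) ∈ Ideal.span {(ℓ:ℤ_[ℓ])^n} :=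
          Ideal.span_singleton_le_span_singleton.mpr (pow_dvd_pow _ hN)
            (PadicInt.appr_spec N (a k))
        rw [← PadicInt.ker_toZModPow] at hmem
        have h0 := RingHom.mem_ker.mp hmem
        rw [map_sub, map_natCast, sub_eq_zero] at h0
        exact h0.symm
      have := hint (fun i => (a i).appr N)
      rw [harg] at this
      exact this
    have h4' : (fun N => E ((ρ (y N) : MvPowerSeries (Fin d) ℤ_[ℓ])))
        =ᶠ[atTop] (fun _ => ((ψ (fun k => PadicInt.toZModPow n (a k)) : Kˣ) : K)) := h4
    exact tendsto_nhds_unique h3 (Tendsto.congr' h4'.symm tendsto_const_nhds)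
  have hkey2 : ∀ a : Fin d → ℤ_[ℓ], E ((ρ (-a) : MvPowerSeries (Fin d) ℤ_[ℓ]))
      = (((ψ (fun k => PadicInt.toZModPow n (a k)) : Kˣ) : K))⁻¹ := by
    intro a
    refine eq_inv_of_mul_eq_one_left ?_
    rw [← hkey a, ← map_mul]
    have hone : (ρ (-a) : MvPowerSeries (Fin d) ℤ_[ℓ]) * (ρ a : MvPowerSeries (Fin d) ℤ_[ℓ])
        = 1 := by
      rw [← Units.val_mul, ← hρhom, neg_add_cancel, hρ0, Units.val_one]
    rw [hone, map_one]
  -- final determinant computation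
  rw [hQ]
  show E _ = _
  rw [RingHom.map_det, RingHom.mapMatrix_apply]
  congr 1
  ext i j
  rw [Matrix.map_apply, Matrix.sub_apply, map_sub, Matrix.sub_apply]
  congr 1
  · rw [Matrix.diagonal_apply, Matrix.diagonal_apply, apply_ite E, map_natCast, map_zero]
  · rw [Matrix.of_apply, Matrix.of_apply, map_add, map_sum, map_sum]
    congr 1
    · exact Finset.sum_congr rfl fun s _ => hkey (α s)
    · refine Finset.sum_congr rfl fun s _ => ?_
      rw [hkey2 (α s)]
end

section
/- (Equation (2.9), matrix form.) Let G be a finite abelian group and β: S → G a voltage assignment. Assume X is connected, every valency d_i is at least 2, and χ(X) = g − |S| ≠ 0, and assume the derived multigraph Y = X(G, S, β) is connected. Let κ_Y be the determinant of the Laplacian of Y with the row and column indexed by (1, 0) deleted, and κ_X the determinant of the Laplacian D − A of X with the first row and column deleted (where A_{ij} = #{s: o(s)=i, t(s)=j} + #{s: o(s)=j, t(s)=i}). Then |G| · κ_Y = κ_X · ∏_{ψ ≠ 1} det(D − A_ψ), the product being over the nontrivial group homomorphisms ψ: G → ℂ^× and A_ψ the g×g matrix with (A_ψ)_{ij} =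 ∑_{s: o(s)=i, t(s)=j} ψ(β(s)) + ∑_{s: o(s)=j, t(s)=i} ψ(β(s))^{−1}. -/
/-- Connectedness of the multigraph with vertex set `V`, edge set `E`, origin map `o`
and terminus map `t`: any two vertices are joined by a walk. -/
def IsConnectedMultigraph {V E : Type*} (o t : E → V) : Prop :=
  ∀ v w : V, Relation.ReflTransGen
    (fun a b => ∃ e, (o e = a ∧ t e = b) ∨ (o e = b ∧ t e = a)) v w

/-- The determinant of a square matrix with the row and the column indexed by `v₀`
deleted. -/
def deletedDet {V : Type*} [Fintype V] [DecidableEq V] (L : Matrix V V ℤ) (v₀ : V) : ℤ :=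
  Matrix.det (Matrix.of fun x y : {x : V // x ≠ v₀} => L x.1 y.1)

/-- The Laplacian (over `ℤ`) of the derived multigraph `X(G, S, β)`:
`L[(i,σ),(j,τ)] = dᵢ·δ_{(i,σ),(j,τ)} - #{s : o(s)=i, t(s)=j, τ = σ + β s}
 - #{s : o(s)=j, t(s)=i, τ = σ - β s}`. -/
def derivedLaplacian {g : ℕ} {S : Type*} [Fintype S] (eo et : S → Fin g)
    {G : Type*} [AddCommGroup G] [DecidableEq G] (β : S → G) :
    Matrix (Fin g × G) (Fin g × G) ℤ :=
  Matrix.of fun p q =>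
    (valency eo et p.1 : ℤ) * (if p = q then 1 else 0)
      - (Finset.univ.filter fun s => eo s = p.1 ∧ et s = q.1 ∧ q.2 = p.2 + β s).card
      - (Finset.univ.filter fun s => eo s = q.1 ∧ et s = p.1 ∧ q.2 = p.2 - β s).card

open Matrix Finset

section LemA

variable {V : Type*} [Fintype V] [DecidableEq V]

lemma lemA (L : Matrix V V ℂ)
    (hr : ∀ i, ∑ j, L i j = 0) (hc : ∀ j, ∑ i, L i j = 0) (v₀ : V) (x : ℂ) :
    (L + Matrix.of fun _ _ => x).det =
      x * (Fintype.card V : ℂ) ^ 2 *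
        (Matrix.of fun a b : {v : V // v ≠ v₀} => L a.1 b.1).det := by
  haveI : Nonempty V := ⟨v₀⟩
  set n : ℂ := (Fintype.card V : ℂ) with hn
  have hn0 : n ≠ 0 := Nat.cast_ne_zero.2 Fintype.card_ne_zero
  set M : Matrix V V ℂ := L + Matrix.of fun _ _ => x with hM
  -- elementary matrices
  set e : V → ℂ := fun v => if v = v₀ then 1 else 0 with he
  set u : V → ℂ := fun v => if v = v₀ then 0 else 1 with hu
  set u' : V → ℂ := fun v => if v = v₀ then 0 else -n⁻¹ with hu'
  set P : Matrix V V ℂ := 1 + replicateCol Unit e * replicateRow Unit u with hP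
  set Q : Matrix V V ℂ := 1 + replicateCol Unit u * replicateRow Unit e with hQ
  set R : Matrix V V ℂ := 1 + replicateCol Unit u' * replicateRow Unit e with hR
  have dot1 : u ⬝ᵥ e = 0 := by
    refine Finset.sum_eq_zero fun v _ => ?_
    simp only [he, hu]; by_cases h : v = v₀ <;> simp [h]
  have dot2 : e ⬝ᵥ u = 0 := by
    refine Finset.sum_eq_zero fun v _ => ?_
    simp only [he, hu]; by_cases h : v = v₀ <;> simp [h]
  have dot3 : e ⬝ᵥ u' = 0 := by
    refine Finset.sum_eq_zero fun v _ => ?_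
    simp only [he, hu']; by_cases h : v = v₀ <;> simp [h]
  have hPd : P.det = 1 := by
    rw [hP, det_one_add_replicateCol_mul_replicateRow, dot1]; ring
  have hQd : Q.det = 1 := by
    rw [hQ, det_one_add_replicateCol_mul_replicateRow, dot2]; ring
  have hRd : R.det = 1 := by
    rw [hR, det_one_add_replicateCol_mul_replicateRow, dot3]; ring
  have hPe : ∀ i j, P i j = if i = v₀ then 1 else if i = j then 1 else 0 := by
    intro i j
    simp only [hP, Matrix.add_apply, Matrix.one_apply, Matrix.mul_apply, Finset.univ_unique,
      Finset.sum_singleton, replicateCol_apply, replicateRow_apply, he, hu]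
    by_cases h1 : i = v₀ <;> by_cases h2 : j = v₀ <;> by_cases h3 : i = j <;>
      simp [h1, h2, h3] <;> simp_all
  have hQe : ∀ i j, Q i j = if j = v₀ then 1 else if i = j then 1 else 0 := by
    intro i j
    simp only [hQ, Matrix.add_apply, Matrix.one_apply, Matrix.mul_apply, Finset.univ_unique,
      Finset.sum_singleton, replicateCol_apply, replicateRow_apply, he, hu]
    by_cases h1 : i = v₀ <;> by_cases h2 : j = v₀ <;> by_cases h3 : i = j <;>
      simp [h1, h2, h3] <;> simp_all
  have hRe : ∀ i j, R i j = if i = j then 1 else if j = v₀ then -n⁻¹ else 0 := by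
    intro i j
    simp only [hR, Matrix.add_apply, Matrix.one_apply, Matrix.mul_apply, Finset.univ_unique,
      Finset.sum_singleton, replicateCol_apply, replicateRow_apply, he, hu']
    by_cases h1 : i = v₀ <;> by_cases h2 : j = v₀ <;> by_cases h3 : i = j <;>
      simp [h1, h2, h3] <;> simp_all
  -- the matrix after row and column operations
  have hMsum : ∀ i, ∑ j, M i j = n * x := by
    intro i
    rw [hM]
    simp only [Matrix.add_apply, of_apply, Finset.sum_add_distrib, hr i]
    simp [hn, mul_comm]
  have hMsum' : ∀ j, ∑ i, M i j = n * x := by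
    intro j
    rw [hM]
    simp only [Matrix.add_apply, of_apply, Finset.sum_add_distrib, hc j]
    simp [hn, mul_comm]
  set M1 : Matrix V V ℂ := Matrix.of fun i j => if i = v₀ then n * x else M i j with hM1
  have e1 : P * M = M1 := by
    ext i j
    rw [Matrix.mul_apply]
    show _ = if i = v₀ then n * x else M i j
    by_cases h1 : i = v₀
    · rw [if_pos h1]
      have hs : ∑ k, P i k * M k j = ∑ k, M k j :=
        Finset.sum_congr rfl fun k _ => by rw [hPe, if_pos h1, one_mul]
      rw [hs, hMsum' j]
    · rw [if_neg h1]
      rw [Finset.sum_eq_single i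
        (fun b _ hb => by rw [hPe, if_neg h1, if_neg fun h => hb h.symm, zero_mul])
        (by simp)]
      rw [hPe, if_neg h1, if_pos rfl, one_mul]
  set M2 : Matrix V V ℂ := Matrix.of fun i j =>
      if j = v₀ then (if i = v₀ then n * (n * x) else n * x) else M1 i j with hM2
  have e2 : M1 * Q = M2 := by
    ext i j
    rw [Matrix.mul_apply]
    show _ = if j = v₀ then (if i = v₀ then n * (n * x) else n * x) else M1 i j
    by_cases h1 : j = v₀
    · rw [if_pos h1]
      have hs : ∑ k, M1 i k * Q k j = ∑ k, M1 i k :=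
        Finset.sum_congr rfl fun k _ => by rw [hQe, if_pos h1, mul_one]
      rw [hs]
      by_cases h2 : i = v₀
      · rw [if_pos h2]
        have hs2 : ∑ k, M1 i k = ∑ _k : V, n * x :=
          Finset.sum_congr rfl fun k _ => by simp only [hM1, of_apply, if_pos h2]
        rw [hs2, Finset.sum_const, Finset.card_univ, nsmul_eq_mul, ← hn]
      · rw [if_neg h2]
        have hs2 : ∑ k, M1 i k = ∑ k, M i k :=
          Finset.sum_congr rfl fun k _ => by simp only [hM1, of_apply, if_neg h2]
        rw [hs2, hMsum i]
    · rw [if_neg h1]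
      rw [Finset.sum_eq_single j
        (fun b _ hb => by rw [hQe, if_neg h1, if_neg hb, mul_zero])
        (by simp)]
      rw [hQe, if_neg h1, if_pos rfl, mul_one]
  set M3 : Matrix V V ℂ := Matrix.of fun i j =>
      if i = v₀ then (if j = v₀ then n * (n * x) else n * x)
      else (if j = v₀ then 0 else L i j) with hM3
  have e3 : R * M2 = M3 := by
    ext i j
    rw [Matrix.mul_apply]
    show _ = if i = v₀ then (if j = v₀ then n * (n * x) else n * x)
      else (if j = v₀ then 0 else L i j)
    by_cases h1 : i = v₀
    · rw [if_pos h1]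
      rw [Finset.sum_eq_single i
        (fun b _ hb => by
          rw [hRe, if_neg fun h => hb h.symm, if_neg (h1 ▸ fun h => hb h), zero_mul])
        (by simp)]
      rw [hRe, if_pos rfl, one_mul]
      simp only [hM2, of_apply, hM1, h1]
      by_cases h2 : j = v₀ <;> simp [h2]
    · rw [if_neg h1]
      have hsub : ∑ k, R i k * M2 k j = ∑ k ∈ ({i, v₀} : Finset V), R i k * M2 k j := by
        refine (Finset.sum_subset (Finset.subset_univ _) fun b _ hb => ?_).symm
        simp only [Finset.mem_insert, Finset.mem_singleton, not_or] at hb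
        rw [hRe, if_neg fun h => hb.1 h.symm, if_neg hb.2, zero_mul]
      rw [hsub, Finset.sum_pair h1]
      rw [hRe, if_pos rfl, one_mul, hRe, if_neg h1, if_pos rfl]
      by_cases h2 : j = v₀
      · rw [if_pos h2]
        simp only [hM2, of_apply, if_pos h2, if_neg h1, if_pos rfl, hM1, h2]
        simp only [if_true, if_false]
        field_simp
        ring
      · rw [if_neg h2]
        simp only [hM2, of_apply, if_neg h2, hM1, of_apply, if_neg h1, if_pos rfl, hM]
        simp only [Matrix.add_apply, of_apply]
        simp only [if_true, if_false]
        field_simp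
        ring
  have hdet : M.det = M3.det := by
    have h4 : M3 = R * (P * M * Q) := by rw [e1, e2, e3]
    rw [h4, Matrix.det_mul, Matrix.det_mul, Matrix.det_mul, hPd, hQd, hRd]
    ring
  -- block decomposition
  haveI : Unique {v : V // v = v₀} := ⟨⟨⟨v₀, rfl⟩⟩, fun a => Subtype.ext a.2⟩
  set σ : {v : V // v = v₀} ⊕ {v : V // ¬v = v₀} ≃ V := Equiv.sumCompl (· = v₀) with hσ
  have hsub : M3.submatrix σ σ =
      Matrix.fromBlocks (Matrix.of fun _ _ : {v : V // v = v₀} => n * (n * x))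
        (Matrix.of fun (_ : {v : V // v = v₀}) (_ : {v : V // ¬v = v₀}) => n * x)
        0 (Matrix.of fun a b : {v : V // ¬v = v₀} => L a.1 b.1) := by
    ext a b
    cases a with
    | inl a => cases b with
      | inl b => simp [hM3, hσ, a.2, b.2]
      | inr b => simp [hM3, hσ, a.2, b.2]
    | inr a => cases b with
      | inl b => simp [hM3, hσ, a.2, b.2]
      | inr b => simp [hM3, hσ, a.2, b.2]
  have hdet3 : M3.det = n * (n * x) *
      (Matrix.of fun a b : {v : V // v ≠ v₀} => L a.1 b.1).det := by
    rw [← Matrix.det_submatrix_equiv_self σ M3, hsub, Matrix.det_fromBlocks_zero₂₁,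
      Matrix.det_unique]
    rfl
  rw [hdet, hdet3]
  ring
end LemA

section Helpers

variable {S' γ : Type*} [Fintype S'] [Fintype γ] [DecidableEq γ]

lemma sum_filter_card_mul (p : S' → Prop) [DecidablePred p] (f : S' → γ) (φ : γ → ℂ) :
    ∑ c : γ, ((Finset.univ.filter fun s => p s ∧ f s = c).card : ℂ) * φ c
      = ∑ s ∈ Finset.univ.filter p, φ (f s) := by
  have h1 : ∀ c : γ, (Finset.univ.filter fun s => p s ∧ f s = c)
      = (Finset.univ.filter p).filter fun s => f s = c := fun c =>
    (Finset.filter_filter _ _ _).symm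
  simp_rw [h1, Finset.card_filter, Nat.cast_sum, Finset.sum_mul, Nat.cast_ite, Nat.cast_one,
    Nat.cast_zero, ite_mul, one_mul, zero_mul]
  rw [Finset.sum_comm]
  exact Finset.sum_congr rfl fun s _ => by
    rw [Finset.sum_ite_eq Finset.univ (f s) φ, if_pos (Finset.mem_univ _)]

lemma sum_filter_card (p : S' → Prop) [DecidablePred p] (f : S' → γ) :
    ∑ c : γ, ((Finset.univ.filter fun s => p s ∧ f s = c).card : ℂ)
      = ((Finset.univ.filter p).card : ℂ) := by
  have := sum_filter_card_mul p f (fun _ => (1 : ℂ))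
  simpa using this

end Helpers

section LemB

variable {g : ℕ} {S : Type*} [Fintype S] (eo et : S → Fin g)
  {G : Type*} [AddCommGroup G] [Fintype G] [DecidableEq G] (β : S → G)

/-- The `ψ`-block of the Fourier-transformed Laplacian. -/
noncomputable def BB (χ : AddChar G ℂ) : Matrix (Fin g) (Fin g) ℂ :=
  Matrix.of fun i j => (valency eo et i : ℂ) * (if i = j then 1 else 0)
    - (∑ s ∈ Finset.univ.filter fun s => eo s = i ∧ et s = j, χ (β s))
    - (∑ s ∈ Finset.univ.filter fun s => eo s = j ∧ et s = i, χ (-β s))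
    + (if χ = 1 then (Fintype.card G : ℂ) else 0)

lemma lemB :
    (Matrix.of (fun p q : Fin g × G => ((derivedLaplacian eo et β p q : ℤ) : ℂ))
        + Matrix.of fun _ _ => (1 : ℂ)).det
      = ∏ χ : AddChar G ℂ, (BB eo et β χ).det := by
  classical
  set M : Matrix (Fin g × G) (Fin g × G) ℂ :=
    Matrix.of (fun p q : Fin g × G => ((derivedLaplacian eo et β p q : ℤ) : ℂ))
      + Matrix.of fun _ _ => (1 : ℂ) with hM
  obtain ⟨ec⟩ : Nonempty (AddChar G ℂ ≃ G) := ⟨Fintype.equivOfCardEq (AddChar.card_eq)⟩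
  set χof : G → AddChar G ℂ := fun τ => ec.symm τ with hχof
  have χof_inj : Function.Injective χof := ec.symm.injective
  set U : Matrix (Fin g × G) (Fin g × G) ℂ :=
    Matrix.of fun p q => if p.1 = q.1 then χof q.2 p.2 else 0 with hU
  set W : Matrix (Fin g × G) (Fin g × G) ℂ :=
    Matrix.of fun p q => if p.1 = q.1 then χof p.2 (-q.2) else 0 with hW
  set Bh : Matrix (Fin g × G) (Fin g × G) ℂ :=
    Matrix.of fun p q => if p.2 = q.2 then BB eo et β (χof q.2) p.1 q.1 else 0 with hBh
  have hWU : W * U = (Fintype.card G : ℂ) • 1 := by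
    ext p q
    rw [Matrix.mul_apply, Fintype.sum_prod_type]
    have hterm : ∀ (k : Fin g) (τ : G), W p (k, τ) * U (k, τ) q =
        if k = p.1 then (if p.1 = q.1 then ((χof p.2)⁻¹ * χof q.2) τ else 0) else 0 := by
      intro k τ
      simp only [hW, hU, of_apply]
      by_cases h1 : k = p.1
      · subst h1
        by_cases h2 : p.1 = q.1
        · rw [if_pos rfl, if_pos h2, if_pos rfl, if_pos h2, AddChar.mul_apply,
            AddChar.inv_apply]
        · rw [if_pos rfl, if_neg h2, if_pos rfl, if_neg h2, mul_zero]
      · rw [if_neg (fun h => h1 h.symm), if_neg h1, zero_mul]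
    simp_rw [hterm]
    have hcol : ∀ k : Fin g, (∑ τ : G, if k = p.1 then
        (if p.1 = q.1 then ((χof p.2)⁻¹ * χof q.2) τ else 0) else 0) =
        if k = p.1 then (if p.1 = q.1 then (∑ τ : G, ((χof p.2)⁻¹ * χof q.2) τ) else 0) else 0 := by
      intro k
      by_cases h1 : k = p.1 <;> by_cases h2 : p.1 = q.1 <;> simp [h1, h2]
    simp_rw [hcol]
    rw [Finset.sum_ite_eq' Finset.univ p.1, if_pos (Finset.mem_univ _)]
    have hchar : (∑ τ : G, ((χof p.2)⁻¹ * χof q.2) τ) =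
        if p.2 = q.2 then (Fintype.card G : ℂ) else 0 := by
      by_cases h : p.2 = q.2
      · rw [if_pos h, h, inv_mul_cancel]
        simp
      · rw [if_neg h]
        rw [AddChar.sum_eq_zero_iff_ne_zero.2]
        rw [Ne, ← AddChar.one_eq_zero, inv_mul_eq_one]
        exact fun hh => h (χof_inj hh)
    rw [hchar]
    simp only [Matrix.smul_apply, Matrix.one_apply, smul_eq_mul]
    by_cases h1 : p.1 = q.1 <;> by_cases h2 : p.2 = q.2
    · rw [if_pos h1, if_pos h2, if_pos (Prod.ext h1 h2), mul_one]
    · rw [if_pos h1, if_neg h2, if_neg (fun hh => h2 (by rw [hh])), mul_zero]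
    · rw [if_neg h1, if_neg (fun hh => h1 (by rw [hh])), mul_zero]
    · rw [if_neg h1, if_neg (fun hh => h1 (by rw [hh])), mul_zero]
  have hUdet : U.det ≠ 0 := by
    intro h0
    have := congrArg Matrix.det hWU
    rw [Matrix.det_mul, h0, mul_zero, Matrix.det_smul, Matrix.det_one, mul_one] at this
    exact (pow_ne_zero _ (Nat.cast_ne_zero.2 Fintype.card_ne_zero :
      (Fintype.card G : ℂ) ≠ 0)) this.symm
  have key : M * U = U * Bh := by
    ext p q
    set χ : AddChar G ℂ := χof q.2 with hχ
    have hRHS : (U * Bh) p q = χ p.2 * BB eo et β χ p.1 q.1 := by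
      rw [Matrix.mul_apply]
      rw [Finset.sum_eq_single (p.1, q.2) ?_ (by simp)]
      · simp only [hU, hBh, of_apply]
        simp
        rfl
      · intro r _ hr
        simp only [hU, hBh, of_apply]
        by_cases h1 : p.1 = r.1
        · rw [if_neg (fun h : r.2 = q.2 => hr (Prod.ext h1.symm h)), mul_zero]
        · rw [if_neg h1, zero_mul]
    rw [hRHS, Matrix.mul_apply, Fintype.sum_prod_type]
    have hterm : ∀ (k : Fin g) (τ : G), M p (k, τ) * U ((k, τ)) q =
        if k = q.1 then M p (k, τ) * χ τ else 0 := by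
      intro k τ
      simp only [hU, of_apply]
      by_cases h : k = q.1 <;> simp [h, hχ]
    simp_rw [hterm]
    have hcol : ∀ k : Fin g, (∑ τ : G, if k = q.1 then M p (k, τ) * χ τ else 0)
        = if k = q.1 then (∑ τ : G, M p (k, τ) * χ τ) else 0 := fun k => by
      by_cases h : k = q.1 <;> simp [h]
    simp_rw [hcol]
    rw [Finset.sum_ite_eq' Finset.univ q.1, if_pos (Finset.mem_univ _)]
    have hMe : ∀ τ : G, M p (q.1, τ) =
        (valency eo et p.1 : ℂ) * (if p = (q.1, τ) then 1 else 0)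
        - ((Finset.univ.filter fun s => eo s = p.1 ∧ et s = q.1 ∧ τ = p.2 + β s).card : ℂ)
        - ((Finset.univ.filter fun s => eo s = q.1 ∧ et s = p.1 ∧ τ = p.2 - β s).card : ℂ)
        + 1 := by
      intro τ
      simp only [hM, Matrix.add_apply, of_apply, derivedLaplacian]
      push_cast [apply_ite (Int.cast : ℤ → ℂ)]
      ring
    simp_rw [hMe, add_mul, sub_mul, one_mul, Finset.sum_add_distrib, Finset.sum_sub_distrib]
    have hA : (∑ τ : G, (valency eo et p.1 : ℂ) * (if p = (q.1, τ) then 1 else 0) * χ τ)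
        = (valency eo et p.1 : ℂ) * (if p.1 = q.1 then 1 else 0) * χ p.2 := by
      have h1 : ∀ τ : G, (valency eo et p.1 : ℂ) * (if p = (q.1, τ) then 1 else 0) * χ τ
          = if τ = p.2 then (valency eo et p.1 : ℂ) * (if p.1 = q.1 then 1 else 0) * χ τ else 0 := by
        intro τ
        by_cases h : τ = p.2
        · subst h
          by_cases h2 : p.1 = q.1
          · rw [if_pos (show p = (q.1, p.2) from Prod.ext h2 rfl), if_pos h2, if_pos rfl]
          · rw [if_neg (fun hh : p = (q.1, p.2) => h2 (by rw [hh])), if_neg h2, if_pos rfl]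
        · rw [if_neg (fun hh : p = (q.1, τ) => h (by rw [hh])), if_neg h, mul_zero, zero_mul]
      simp_rw [h1]
      rw [Finset.sum_ite_eq' Finset.univ p.2, if_pos (Finset.mem_univ _)]
    have hsetB : ∀ τ : G, (Finset.univ.filter fun s => eo s = p.1 ∧ et s = q.1 ∧ τ = p.2 + β s)
        = (Finset.univ.filter fun s => (eo s = p.1 ∧ et s = q.1) ∧ (fun s => p.2 + β s) s = τ) := by
      intro τ
      apply Finset.filter_congr
      intro s _
      exact ⟨fun ⟨h1, h2, h3⟩ => ⟨⟨h1, h2⟩, h3.symm⟩, fun ⟨⟨h1, h2⟩, h3⟩ => ⟨h1, h2, h3.symm⟩⟩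
    have hB : (∑ τ : G,
        ((Finset.univ.filter fun s => eo s = p.1 ∧ et s = q.1 ∧ τ = p.2 + β s).card : ℂ) * χ τ)
        = χ p.2 * ∑ s ∈ Finset.univ.filter fun s => eo s = p.1 ∧ et s = q.1, χ (β s) := by
      simp_rw [hsetB]
      rw [sum_filter_card_mul (fun s => eo s = p.1 ∧ et s = q.1) (fun s => p.2 + β s) χ,
        Finset.mul_sum]
      exact Finset.sum_congr rfl fun s _ => by rw [AddChar.map_add_eq_mul]
    have hsetC : ∀ τ : G, (Finset.univ.filter fun s => eo s = q.1 ∧ et s = p.1 ∧ τ = p.2 - β s)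
        = (Finset.univ.filter fun s => (eo s = q.1 ∧ et s = p.1) ∧ (fun s => p.2 - β s) s = τ) := by
      intro τ
      apply Finset.filter_congr
      intro s _
      exact ⟨fun ⟨h1, h2, h3⟩ => ⟨⟨h1, h2⟩, h3.symm⟩, fun ⟨⟨h1, h2⟩, h3⟩ => ⟨h1, h2, h3.symm⟩⟩
    have hC : (∑ τ : G,
        ((Finset.univ.filter fun s => eo s = q.1 ∧ et s = p.1 ∧ τ = p.2 - β s).card : ℂ) * χ τ)
        = χ p.2 * ∑ s ∈ Finset.univ.filter fun s => eo s = q.1 ∧ et s = p.1, χ (-β s) := by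
      simp_rw [hsetC]
      rw [sum_filter_card_mul (fun s => eo s = q.1 ∧ et s = p.1) (fun s => p.2 - β s) χ,
        Finset.mul_sum]
      refine Finset.sum_congr rfl fun s _ => ?_
      rw [sub_eq_add_neg, AddChar.map_add_eq_mul]
    have hD : (∑ τ : G, χ τ) = if χ = 1 then (Fintype.card G : ℂ) else 0 := by
      by_cases h : χ = 1
      · rw [if_pos h, h]
        simp
      · rw [if_neg h]
        exact AddChar.sum_eq_zero_iff_ne_zero.2
          fun h0 => h (by rw [AddChar.one_eq_zero]; exact h0)
    rw [hA, hB, hC, hD]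
    simp only [BB, of_apply]
    by_cases hχ1 : χ = 1
    · simp only [if_pos hχ1, hχ1, AddChar.one_apply]
      ring
    · simp only [if_neg hχ1]
      ring
  have hdet : M.det = Bh.det := by
    have h := congrArg Matrix.det key
    rw [Matrix.det_mul, Matrix.det_mul, mul_comm U.det _] at h
    exact mul_right_cancel₀ hUdet h
  have hB : Bh.det = ∏ χ : AddChar G ℂ, (BB eo et β χ).det := by
    have hsub : Bh = (Matrix.blockDiagonal fun χ : AddChar G ℂ => BB eo et β χ).submatrix
        (Equiv.prodCongr (Equiv.refl (Fin g)) ec.symm)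
        (Equiv.prodCongr (Equiv.refl (Fin g)) ec.symm) := by
      ext p q
      simp only [hBh, of_apply, Matrix.submatrix_apply, Equiv.prodCongr_apply, Equiv.coe_refl,
        Prod.map, Matrix.blockDiagonal_apply, id_eq]
      by_cases h : p.2 = q.2
      · rw [if_pos h, if_pos (show ec.symm p.2 = ec.symm q.2 by rw [h])]
        simp only [hχof, h]
      · rw [if_neg h, if_neg (fun hh => h (ec.symm.injective hh))]
    rw [hsub, Matrix.det_submatrix_equiv_self, Matrix.det_blockDiagonal]
  rw [hdet, hB]

end LemB

section Syms
variable {g : ℕ} {S : Type*} [Fintype S] (eo et : S → Fin g)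
  {G : Type*} [AddCommGroup G] [Fintype G] [DecidableEq G] (β : S → G)

lemma dL_symm (p q : Fin g × G) :
    derivedLaplacian eo et β p q = derivedLaplacian eo et β q p := by
  simp only [derivedLaplacian, of_apply]
  have hA : (valency eo et p.1 : ℤ) * (if p = q then 1 else 0)
      = (valency eo et q.1 : ℤ) * (if q = p then 1 else 0) := by
    by_cases h : p = q
    · rw [h]
    · rw [if_neg h, if_neg (fun hh => h hh.symm), mul_zero, mul_zero]
  have h12 : (Finset.univ.filter fun s => eo s = p.1 ∧ et s = q.1 ∧ q.2 = p.2 + β s)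
      = (Finset.univ.filter fun s => eo s = p.1 ∧ et s = q.1 ∧ p.2 = q.2 - β s) := by
    refine Finset.filter_congr fun s _ => ?_
    constructor
    · rintro ⟨h1, h2, h3⟩
      exact ⟨h1, h2, by rw [h3]; exact (add_sub_cancel_right _ _).symm⟩
    · rintro ⟨h1, h2, h3⟩
      exact ⟨h1, h2, by rw [h3]; exact (sub_add_cancel _ _).symm⟩
  have h21 : (Finset.univ.filter fun s => eo s = q.1 ∧ et s = p.1 ∧ q.2 = p.2 - β s)
      = (Finset.univ.filter fun s => eo s = q.1 ∧ et s = p.1 ∧ p.2 = q.2 + β s) := by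
    refine Finset.filter_congr fun s _ => ?_
    constructor
    · rintro ⟨h1, h2, h3⟩
      exact ⟨h1, h2, by rw [h3]; exact (sub_add_cancel _ _).symm⟩
    · rintro ⟨h1, h2, h3⟩
      exact ⟨h1, h2, by rw [h3]; exact (add_sub_cancel_right _ _).symm⟩
  rw [hA, h12, h21]
  ring

lemma hrY (p : Fin g × G) :
    ∑ q : Fin g × G, ((derivedLaplacian eo et β p q : ℤ) : ℂ) = 0 := by
  have hent : ∀ q : Fin g × G, ((derivedLaplacian eo et β p q : ℤ) : ℂ) =
      (valency eo et p.1 : ℂ) * (if p = q then 1 else 0)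
      - ((Finset.univ.filter fun s => eo s = p.1 ∧ et s = q.1 ∧ q.2 = p.2 + β s).card : ℂ)
      - ((Finset.univ.filter fun s => eo s = q.1 ∧ et s = p.1 ∧ q.2 = p.2 - β s).card : ℂ) := by
    intro q
    simp only [derivedLaplacian, of_apply]
    push_cast [apply_ite (Int.cast : ℤ → ℂ)]
    ring
  simp_rw [hent, Finset.sum_sub_distrib, mul_ite, mul_one, mul_zero]
  rw [Finset.sum_ite_eq Finset.univ p fun _ => (valency eo et p.1 : ℂ),
    if_pos (Finset.mem_univ _)]
  have hs1 : ∀ q : Fin g × G,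
      (Finset.univ.filter fun s => eo s = p.1 ∧ et s = q.1 ∧ q.2 = p.2 + β s)
      = (Finset.univ.filter fun s => (eo s = p.1) ∧ (fun s => (et s, p.2 + β s)) s = q) := by
    intro q
    refine Finset.filter_congr fun s _ => ?_
    constructor
    · rintro ⟨h1, h2, h3⟩
      exact ⟨h1, show ((et s, p.2 + β s) : Fin g × G) = q from Prod.ext h2 h3.symm⟩
    · rintro ⟨h1, h2⟩
      exact ⟨h1, congrArg Prod.fst h2, (congrArg Prod.snd h2).symm⟩
  have hs2 : ∀ q : Fin g × G,
      (Finset.univ.filter fun s => eo s = q.1 ∧ et s = p.1 ∧ q.2 = p.2 - β s)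
      = (Finset.univ.filter fun s => (et s = p.1) ∧ (fun s => (eo s, p.2 - β s)) s = q) := by
    intro q
    refine Finset.filter_congr fun s _ => ?_
    constructor
    · rintro ⟨h1, h2, h3⟩
      exact ⟨h2, show ((eo s, p.2 - β s) : Fin g × G) = q from Prod.ext h1 h3.symm⟩
    · rintro ⟨h1, h2⟩
      exact ⟨congrArg Prod.fst h2, h1, (congrArg Prod.snd h2).symm⟩
  simp_rw [hs1, hs2]
  rw [sum_filter_card (fun s => eo s = p.1) (fun s => ((et s, p.2 + β s) : Fin g × G)),
    sum_filter_card (fun s => et s = p.1) (fun s => ((eo s, p.2 - β s) : Fin g × G))]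
  have : (valency eo et p.1 : ℂ) =
      ((Finset.univ.filter fun s => eo s = p.1).card : ℂ)
      + ((Finset.univ.filter fun s => et s = p.1).card : ℂ) := by
    simp only [valency]; push_cast; ring
  rw [this]; ring

lemma hcY (q : Fin g × G) :
    ∑ p : Fin g × G, ((derivedLaplacian eo et β p q : ℤ) : ℂ) = 0 := by
  calc ∑ p : Fin g × G, ((derivedLaplacian eo et β p q : ℤ) : ℂ)
      = ∑ p : Fin g × G, ((derivedLaplacian eo et β q p : ℤ) : ℂ) := by
        refine Finset.sum_congr rfl fun p _ => ?_
        rw [dL_symm]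
    _ = 0 := hrY eo et β q

end Syms

lemma cast_deletedDet {V : Type*} [Fintype V] [DecidableEq V] (L : Matrix V V ℤ) (v₀ : V) :
    ((deletedDet L v₀ : ℤ) : ℂ)
      = (Matrix.of fun a b : {x : V // x ≠ v₀} => ((L a.1 b.1 : ℤ) : ℂ)).det := by
  rw [deletedDet]
  exact (RingHom.map_det (Int.castRingHom ℂ) _).trans rfl

section XSide
variable {g : ℕ} {S : Type*} [Fintype S] (eo et : S → Fin g)

lemma LX_symm (i j : Fin g) :
    ((valency eo et i : ℤ) * (if i = j then 1 else 0) -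
      (((Finset.univ.filter fun s => eo s = i ∧ et s = j).card : ℤ) +
        ((Finset.univ.filter fun s => eo s = j ∧ et s = i).card : ℤ)))
    = ((valency eo et j : ℤ) * (if j = i then 1 else 0) -
      (((Finset.univ.filter fun s => eo s = j ∧ et s = i).card : ℤ) +
        ((Finset.univ.filter fun s => eo s = i ∧ et s = j).card : ℤ))) := by
  by_cases h : i = j
  · rw [h]
  · rw [if_neg h, if_neg (fun hh => h hh.symm)]; ring

lemma hrX (i : Fin g) :
    ∑ j : Fin g, ((((valency eo et i : ℤ) * (if i = j then 1 else 0) -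
      (((Finset.univ.filter fun s => eo s = i ∧ et s = j).card : ℤ) +
        ((Finset.univ.filter fun s => eo s = j ∧ et s = i).card : ℤ))) : ℤ) : ℂ) = 0 := by
  have hent : ∀ j : Fin g, ((((valency eo et i : ℤ) * (if i = j then 1 else 0) -
      (((Finset.univ.filter fun s => eo s = i ∧ et s = j).card : ℤ) +
        ((Finset.univ.filter fun s => eo s = j ∧ et s = i).card : ℤ))) : ℤ) : ℂ)
      = (valency eo et i : ℂ) * (if i = j then 1 else 0)
        - ((Finset.univ.filter fun s => eo s = i ∧ et s = j).card : ℂ)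
        - ((Finset.univ.filter fun s => eo s = j ∧ et s = i).card : ℂ) := by
    intro j
    push_cast [apply_ite (Int.cast : ℤ → ℂ)]
    ring
  simp_rw [hent, Finset.sum_sub_distrib, mul_ite, mul_one, mul_zero]
  rw [Finset.sum_ite_eq Finset.univ i fun _ => (valency eo et i : ℂ),
    if_pos (Finset.mem_univ _)]
  have hs2 : ∀ j : Fin g, (Finset.univ.filter fun s => eo s = j ∧ et s = i)
      = (Finset.univ.filter fun s => (et s = i) ∧ eo s = j) := fun j =>
    Finset.filter_congr fun s _ => and_comm
  simp_rw [hs2]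
  rw [sum_filter_card (fun s => eo s = i) et, sum_filter_card (fun s => et s = i) eo]
  have : (valency eo et i : ℂ) =
      ((Finset.univ.filter fun s => eo s = i).card : ℂ)
      + ((Finset.univ.filter fun s => et s = i).card : ℂ) := by
    simp only [valency]; push_cast; ring
  rw [this]; ring

lemma hcX (j : Fin g) :
    ∑ i : Fin g, ((((valency eo et i : ℤ) * (if i = j then 1 else 0) -
      (((Finset.univ.filter fun s => eo s = i ∧ et s = j).card : ℤ) +
        ((Finset.univ.filter fun s => eo s = j ∧ et s = i).card : ℤ))) : ℤ) : ℂ) = 0 := by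
  calc ∑ i : Fin g, ((((valency eo et i : ℤ) * (if i = j then 1 else 0) -
      (((Finset.univ.filter fun s => eo s = i ∧ et s = j).card : ℤ) +
        ((Finset.univ.filter fun s => eo s = j ∧ et s = i).card : ℤ))) : ℤ) : ℂ)
      = ∑ i : Fin g, ((((valency eo et j : ℤ) * (if j = i then 1 else 0) -
      (((Finset.univ.filter fun s => eo s = j ∧ et s = i).card : ℤ) +
        ((Finset.univ.filter fun s => eo s = i ∧ et s = j).card : ℤ))) : ℤ) : ℂ) := by
        refine Finset.sum_congr rfl fun i _ => ?_
        rw [LX_symm]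
    _ = 0 := hrX eo et j

end XSide

section UnitsChar
variable {G : Type*} [AddCommGroup G]

noncomputable def toUnitsF (χ : AddChar G ℂ) : G → ℂˣ := fun a =>
  ⟨χ a, χ (-a),
    by rw [← AddChar.map_add_eq_mul, add_neg_cancel, AddChar.map_zero_eq_one],
    by rw [← AddChar.map_add_eq_mul, neg_add_cancel, AddChar.map_zero_eq_one]⟩

def ofUnitsF (ψ : G → ℂˣ) (h : ∀ x y, ψ (x + y) = ψ x * ψ y) : AddChar G ℂ where
  toFun := fun a => (ψ a : ℂ)
  map_zero_eq_one' := by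
    have h0 : ψ 0 = 1 := by
      have h00 := h 0 0
      rw [add_zero] at h00
      exact left_eq_mul.mp h00
    show ((ψ 0 : ℂˣ) : ℂ) = 1
    rw [h0, Units.val_one]
  map_add_eq_mul' := fun x y => by
    show ((ψ (x + y) : ℂˣ) : ℂ) = _
    rw [h x y, Units.val_mul]

@[simp] lemma ofUnitsF_apply (ψ : G → ℂˣ) (h) (a : G) : ofUnitsF ψ h a = (ψ a : ℂ) := rfl

@[simp] lemma toUnitsF_val (χ : AddChar G ℂ) (a : G) : ((toUnitsF χ a : ℂˣ) : ℂ) = χ a := rfl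

lemma toUnitsF_inv_val (χ : AddChar G ℂ) (a : G) :
    (((toUnitsF χ a)⁻¹ : ℂˣ) : ℂ) = χ (-a) := by
  rfl

end UnitsChar

/-- Equation (2.9), matrix form.  Let `G` be a finite abelian group
and `β : S → G` a voltage assignment on the connected multigraph `X` (all valencies
`≥ 2`, `χ(X) = g - |S| ≠ 0`), and assume the derived multigraph `Y = X(G, S, β)` is
connected.  With `κ_Y`, `κ_X` the deleted-determinants of the respective Laplacians,
`|G| · κ_Y = κ_X · ∏_{ψ ≠ 1} det(D - A_ψ)`, the product over the nontrivial group
homomorphisms `ψ : G → ℂˣ` (gathered in the finset `F`). -/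
theorem stmt_7 (g : ℕ) (hg : 0 < g) (S : Type*) [Fintype S] (eo et : S → Fin g)
    (G : Type*) [AddCommGroup G] [Fintype G] [DecidableEq G] (β : S → G)
    (hconnX : IsConnectedMultigraph eo et)
    (hval : ∀ i, 2 ≤ valency eo et i)
    (hchi : (g : ℤ) - Fintype.card S ≠ 0)
    (hconnY : IsConnectedMultigraph
      (fun sσ : S × G => (eo sσ.1, sσ.2))
      (fun sσ : S × G => (et sσ.1, sσ.2 + β sσ.1)))
    (F : Finset (G → ℂˣ))
    (hF : ∀ ψ : G → ℂˣ,
      ψ ∈ F ↔ ((∀ x y, ψ (x + y) = ψ x * ψ y) ∧ ψ ≠ fun _ => 1)) :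
    (Fintype.card G : ℂ) *
        (deletedDet (derivedLaplacian eo et β) (⟨0, hg⟩, 0) : ℤ) =
      ((deletedDet
          (Matrix.of fun i j : Fin g =>
            (valency eo et i : ℤ) * (if i = j then 1 else 0) -
              (((Finset.univ.filter fun s => eo s = i ∧ et s = j).card : ℤ) +
                (Finset.univ.filter fun s => eo s = j ∧ et s = i).card))
          ⟨0, hg⟩ : ℤ) : ℂ) *
        ∏ ψ ∈ F, Matrix.det
          (Matrix.diagonal (fun i => (valency eo et i : ℂ)) -
            Matrix.of fun i j =>
              (∑ s ∈ Finset.univ.filter fun s => eo s = i ∧ et s = j,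
                  (ψ (β s) : ℂ)) +
              ∑ s ∈ Finset.univ.filter fun s => eo s = j ∧ et s = i,
                  ((ψ (β s))⁻¹ : ℂ)) := by
  classical
  set v0X : Fin g := ⟨0, hg⟩ with hv0X
  set v0Y : Fin g × G := (⟨0, hg⟩, 0) with hv0Y
  set LX : Matrix (Fin g) (Fin g) ℤ := Matrix.of fun i j : Fin g =>
      (valency eo et i : ℤ) * (if i = j then 1 else 0) -
        (((Finset.univ.filter fun s => eo s = i ∧ et s = j).card : ℤ) +
          (Finset.univ.filter fun s => eo s = j ∧ et s = i).card) with hLX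
  set LYc : Matrix (Fin g × G) (Fin g × G) ℂ :=
    Matrix.of (fun p q : Fin g × G => ((derivedLaplacian eo et β p q : ℤ) : ℂ)) with hLYc
  set LXc : Matrix (Fin g) (Fin g) ℂ :=
    Matrix.of fun i j : Fin g => ((LX i j : ℤ) : ℂ) with hLXc
  set kYr : ℂ := (Matrix.of fun a b : {p : Fin g × G // p ≠ v0Y} => LYc a.1 b.1).det with hkYr
  set kXr : ℂ := (Matrix.of fun a b : {i : Fin g // i ≠ v0X} => LXc a.1 b.1).det with hkXr
  -- Lemma A applied to Y
  have E1 : (LYc + Matrix.of fun _ _ => (1 : ℂ)).det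
      = 1 * (Fintype.card (Fin g × G) : ℂ) ^ 2 * kYr :=
    lemA LYc (fun p => hrY eo et β p) (fun q => hcY eo et β q) v0Y 1
  -- Lemma B
  have E2 : (LYc + Matrix.of fun _ _ => (1 : ℂ)).det
      = ∏ χ : AddChar G ℂ, (BB eo et β χ).det := lemB eo et β
  -- split off trivial character
  have E4 : ∏ χ : AddChar G ℂ, (BB eo et β χ).det
      = (BB eo et β 1).det * ∏ χ ∈ Finset.univ.erase (1 : AddChar G ℂ), (BB eo et β χ).det :=
    (Finset.mul_prod_erase Finset.univ _ (Finset.mem_univ 1)).symm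
  -- the trivial block
  have hBB1 : BB eo et β 1 = LXc + Matrix.of fun _ _ => ((Fintype.card G : ℕ) : ℂ) := by
    ext i j
    simp only [BB, of_apply, hLXc, hLX, Matrix.add_apply, AddChar.one_apply, if_pos rfl,
      Finset.sum_const, nsmul_eq_mul, mul_one]
    push_cast [apply_ite (Int.cast : ℤ → ℂ)]
    ring
  have E3 : (LXc + Matrix.of fun _ _ => ((Fintype.card G : ℕ) : ℂ)).det
      = ((Fintype.card G : ℕ) : ℂ) * (Fintype.card (Fin g) : ℂ) ^ 2 * kXr :=
    lemA LXc (fun i => hrX eo et i) (fun j => hcX eo et j) v0X _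
  -- the nontrivial blocks match the statement's product
  have E5 : ∏ χ ∈ Finset.univ.erase (1 : AddChar G ℂ), (BB eo et β χ).det
      = ∏ ψ ∈ F, Matrix.det
          (Matrix.diagonal (fun i => (valency eo et i : ℂ)) -
            Matrix.of fun i j =>
              (∑ s ∈ Finset.univ.filter fun s => eo s = i ∧ et s = j,
                  (ψ (β s) : ℂ)) +
              ∑ s ∈ Finset.univ.filter fun s => eo s = j ∧ et s = i,
                  ((ψ (β s))⁻¹ : ℂ)) := by
    refine Finset.prod_bij' (fun χ _ => toUnitsF χ)
      (fun ψ hψ => ofUnitsF ψ ((hF ψ).1 hψ).1) ?_ ?_ ?_ ?_ ?_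
    · intro χ hχ
      rw [hF]
      constructor
      · intro x y
        apply Units.ext
        rw [Units.val_mul]
        exact AddChar.map_add_eq_mul χ x y
      · intro hcon
        refine Finset.ne_of_mem_erase hχ ?_
        apply DFunLike.ext
        intro a
        have h2 : toUnitsF χ a = 1 := congrFun hcon a
        have hval : ((toUnitsF χ a : ℂˣ) : ℂ) = 1 := by rw [h2, Units.val_one]
        rw [AddChar.one_apply]
        exact hval
    · intro ψ hψ
      refine Finset.mem_erase.2 ⟨?_, Finset.mem_univ _⟩
      intro hcon
      refine ((hF ψ).1 hψ).2 ?_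
      funext a
      apply Units.ext
      have := DFunLike.congr_fun hcon a
      rw [AddChar.one_apply] at this
      exact this
    · intro χ hχ
      apply DFunLike.ext
      intro a
      rfl
    · intro ψ hψ
      funext a
      apply Units.ext
      rfl
    · intro χ hχ
      congr 1
      ext i j
      have hχ1 : χ ≠ 1 := Finset.ne_of_mem_erase hχ
      simp only [BB, of_apply, if_neg hχ1, add_zero, Matrix.sub_apply, Matrix.diagonal_apply,
        of_apply, toUnitsF_val, mul_ite, mul_one, mul_zero]
      simp only [AddChar.map_neg_eq_inv]
      ring
  -- the casts of the deleted determinants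
  have hkY : ((deletedDet (derivedLaplacian eo et β) v0Y : ℤ) : ℂ) = kYr :=
    cast_deletedDet (derivedLaplacian eo et β) v0Y
  have hkX : ((deletedDet LX v0X : ℤ) : ℂ) = kXr := cast_deletedDet LX v0X
  rw [hkY, hkX]
  -- final algebra
  have chain : 1 * (Fintype.card (Fin g × G) : ℂ) ^ 2 * kYr
      = ((Fintype.card G : ℕ) : ℂ) * (Fintype.card (Fin g) : ℂ) ^ 2 * kXr
        * ∏ ψ ∈ F, Matrix.det
          (Matrix.diagonal (fun i => (valency eo et i : ℂ)) -
            Matrix.of fun i j =>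
              (∑ s ∈ Finset.univ.filter fun s => eo s = i ∧ et s = j,
                  (ψ (β s) : ℂ)) +
              ∑ s ∈ Finset.univ.filter fun s => eo s = j ∧ et s = i,
                  ((ψ (β s))⁻¹ : ℂ)) := by
    rw [← E1, E2, E4, hBB1, E3, E5]
  have ha : ((g : ℕ) : ℂ) ≠ 0 := Nat.cast_ne_zero.2 hg.ne'
  have hb : ((Fintype.card G : ℕ) : ℂ) ≠ 0 := Nat.cast_ne_zero.2 Fintype.card_ne_zero
  apply mul_left_cancel₀
    (show ((g : ℕ) : ℂ) ^ 2 * ((Fintype.card G : ℕ) : ℂ) ≠ 0 from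
      mul_ne_zero (pow_ne_zero _ ha) hb)
  calc ((g : ℕ) : ℂ) ^ 2 * ((Fintype.card G : ℕ) : ℂ)
        * (((Fintype.card G : ℕ) : ℂ) * kYr)
      = 1 * (Fintype.card (Fin g × G) : ℂ) ^ 2 * kYr := by
        rw [Fintype.card_prod, Fintype.card_fin]
        push_cast
        ring
    _ = ((Fintype.card G : ℕ) : ℂ) * (Fintype.card (Fin g) : ℂ) ^ 2 * kXr * _ := chain
    _ = _ := by
        rw [Fintype.card_fin]
        ring
end
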